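/- Let H : [0,∞) → ℝ be convex with H(0) = 0, and suppose there exists θ > 0 such that lim_{t→∞} (H((1+2θ)t) − 2·H((1+θ)t) + H(t))/t = ∞. Then lim_{t→∞} H(t)/t = ∞. -/

import Mathlib

open Filter

/-- If `H` is convex with `H(0) = 0` and, for some `θ > 0`,
`(H((1+2θ)t) − 2H((1+θ)t) + H(t))/t → ∞` (strong intermittency), then `H(t)/t → ∞`. -/
theorem superlinear_of_strong_intermittency (H : ℝ → ℝ)
    (hconv : ConvexOn ℝ (Set.Ici 0) H) (h0 : H 0 = 0)
    (θ : ℝ) (hθ : 0 < θ)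
    (hlim : Tendsto (fun t : ℝ => (H ((1 + 2 * θ) * t) - 2 * H ((1 + θ) * t) + H t) / t)
      atTop atTop) :
    Tendsto (fun t : ℝ => H t / t) atTop atTop := by
  have hmem : ∀ x : ℝ, 0 ≤ x → x ∈ Set.Ici (0:ℝ) := fun x hx => hx
  -- Lemma A : for t ≥ 1, t * H 1 ≤ H t
  have lemA : ∀ t : ℝ, 1 ≤ t → t * H 1 ≤ H t := by
    intro t ht
    rcases eq_or_lt_of_le ht with h | h
    · rw [← h]; ring_nf; exact le_rfl
    · have hs := hconv.slope_mono_adjacent (hmem 0 le_rfl) (hmem t (by linarith))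
        (by norm_num : (0:ℝ) < 1) h
      rw [h0] at hs
      have h1 : (0:ℝ) < t - 1 := by linarith
      have := (div_le_div_iff₀ (by norm_num : (0:ℝ) < 1 - 0) h1).mp hs
      nlinarith
  set s₂ : ℝ → ℝ := fun t => (H ((1 + 2*θ) * t) - H ((1 + θ) * t)) / (θ * t) with hs₂def
  -- Step 1 : s₂ → ∞
  have hS : Tendsto s₂ atTop atTop := by
    have hlow : Tendsto
        (fun t : ℝ => (H ((1 + 2 * θ) * t) - 2 * H ((1 + θ) * t) + H t) / t / θ + H 1)
        atTop atTop :=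
      tendsto_atTop_add_const_right _ _ (hlim.atTop_div_const hθ)
    apply tendsto_atTop_mono' _ _ hlow
    filter_upwards [eventually_ge_atTop (1:ℝ)] with t ht
    have ht0 : (0:ℝ) < t := by linarith
    have hθt : (0:ℝ) < θ * t := by positivity
    -- s₁ ≥ H t / t ≥ H 1
    have hs1a := hconv.slope_mono_adjacent (hmem 0 le_rfl) (hmem ((1+θ)*t) (by nlinarith))
      ht0 (by nlinarith : t < (1+θ)*t)
    rw [h0] at hs1a
    have hHt : H 1 ≤ H t / t := by
      rw [le_div_iff₀ ht0]; nlinarith [lemA t ht]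
    have hs1 : H 1 ≤ (H ((1+θ)*t) - H t) / (θ * t) := by
      have : (H t - 0) / (t - 0) = H t / t := by ring_nf
      rw [this] at hs1a
      have he : (1+θ)*t - t = θ * t := by ring
      rw [he] at hs1a
      linarith
    -- identity : s₂ t = D t / (θ t) + s₁ t
    have hid : s₂ t = (H ((1 + 2*θ)*t) - 2 * H ((1+θ)*t) + H t) / t / θ
        + (H ((1+θ)*t) - H t) / (θ * t) := by
      rw [hs₂def]
      field_simp
      ring
    rw [hid]
    linarith
  -- Step 2 : conclude
  set a : ℝ := 2 * (1 + 2*θ) with hadef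
  have ha : (0:ℝ) < a := by positivity
  have hg : Tendsto (fun u : ℝ => (1+θ)/a * H 1 + (1+3*θ)/a * s₂ (u / a)) atTop atTop := by
    apply tendsto_atTop_add_const_left
    apply Tendsto.const_mul_atTop (by positivity : (0:ℝ) < (1+3*θ)/a)
    exact hS.comp (tendsto_id.atTop_div_const ha)
  apply tendsto_atTop_mono' _ _ hg
  filter_upwards [eventually_ge_atTop a] with u hu
  set t : ℝ := u / a with htdef
  have ht1 : (1:ℝ) ≤ t := (le_div_iff₀ ha).mpr (by linarith)
  have ht0 : (0:ℝ) < t := by linarith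
  have hu0 : (0:ℝ) < u := by linarith
  have hut : u = a * t := by rw [htdef]; field_simp
  have hθt : (0:ℝ) < θ * t := by positivity
  -- slope monotonicity : s₂ t ≤ slope((1+2θ)t, u)
  have key1 := hconv.slope_mono_adjacent (hmem ((1+θ)*t) (by nlinarith))
    (hmem u hu0.le) (by nlinarith : (1+θ)*t < (1+2*θ)*t)
    (by rw [hut, hadef]; nlinarith : (1+2*θ)*t < u)
  have he1 : (1+2*θ)*t - (1+θ)*t = θ * t := by ring
  rw [he1] at key1
  have hgap : (0:ℝ) < u - (1+2*θ)*t := by rw [hut, hadef]; nlinarith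
  have hgap' : u - (1+2*θ)*t = (1+2*θ)*t := by rw [hut, hadef]; ring
  have key1' : H ((1+2*θ)*t) + (1+2*θ)*t * s₂ t ≤ H u := by
    have hx := (div_le_div_iff₀ hθt hgap).mp key1
    have hs2v : s₂ t = (H ((1 + 2*θ) * t) - H ((1 + θ) * t)) / (θ * t) := rfl
    have h' : (u - (1+2*θ)*t) * s₂ t ≤ H u - H ((1+2*θ)*t) := by
      rw [hs2v, mul_comm, div_mul_eq_mul_div, div_le_iff₀ hθt]
      nlinarith
    rw [hgap'] at h'
    linarith
  -- H((1+2θ)t) = H((1+θ)t) + θt * s₂ t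
  have key2 : H ((1+2*θ)*t) = H ((1+θ)*t) + (θ*t) * s₂ t := by
    have hs2v : s₂ t = (H ((1 + 2*θ) * t) - H ((1 + θ) * t)) / (θ * t) := rfl
    rw [hs2v]; field_simp; ring
  have key3 : (1+θ)*t * H 1 ≤ H ((1+θ)*t) := lemA _ (by nlinarith)
  -- combine
  have hmain : (1+θ)*t * H 1 + (1+3*θ)*t * s₂ t ≤ H u := by
    have hr : (1+3*θ)*t * s₂ t = (1+2*θ)*t * s₂ t + θ*t * s₂ t := by ring
    linarith [key1', key2, key3]
  rw [le_div_iff₀ hu0]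
  have heq : ((1+θ)/a * H 1 + (1+3*θ)/a * s₂ t) * u
      = (1+θ)*t * H 1 + (1+3*θ)*t * s₂ t := by
    rw [hut]; field_simp
  calc ((1+θ)/a * H 1 + (1+3*θ)/a * s₂ t) * u
      = (1+θ)*t * H 1 + (1+3*θ)*t * s₂ t := heq
    _ ≤ H u := hmain
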